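/- arXiv:1305.5217 — 2 statements merged into one kernel-verified Lean document; each statement's English description precedes it below -/
import Mathlib

section
/- Let F be a field of characteristic 0 with u-invariant u(F) ≤ 2^n. Then for every m > n, H^m(F, μ_2) = 0; i.e., the 2-cohomological dimension of F is at most n. -/
universe u

namespace SymbolLength

variable {K : Type u} [Field K]

/-- Value of the diagonal quadratic form `⟨a 0, …, a (n-1)⟩` at a vector `x`. -/
def qeval {n : ℕ} (a : Fin n → Kˣ) (x : Fin n → K) : K :=
  ∑ i, (a i : K) * x i ^ 2

/-- Two diagonal forms of the same dimension are isometric if an invertible linear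
change of variables takes one to the other. -/
def IsIsometric {n : ℕ} (a b : Fin n → Kˣ) : Prop :=
  ∃ M : Matrix (Fin n) (Fin n) K, IsUnit M.det ∧ ∀ x, qeval a (M.mulVec x) = qeval b x

/-- The split (hyperbolic) diagonal form `⟨1, -1, 1, -1, …⟩` of dimension `2 * k`. -/
def hyp (K : Type u) [Field K] (k : ℕ) : Fin (2 * k) → Kˣ :=
  fun i => if (i : ℕ) % 2 = 0 then 1 else -1

/-- Witt equivalence of diagonal forms: they become isometric after adding
hyperbolic forms on both sides. -/
def WittEquiv {n m : ℕ} (a : Fin n → Kˣ) (b : Fin m → Kˣ) : Prop :=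
  ∃ (k l : ℕ) (h : n + 2 * k = m + 2 * l),
    IsIsometric ((Fin.append a (hyp K k)) ∘ Fin.cast h.symm) (Fin.append b (hyp K l))

/-- A diagonal form is anisotropic if it represents `0` only trivially. -/
def IsAnisotropicD {n : ℕ} (a : Fin n → Kˣ) : Prop :=
  ∀ x, qeval a x = 0 → x = 0

/-- Base change of a diagonal form along a field embedding. -/
def mapUnits {L : Type u} [Field L] (f : K →+* L) {n : ℕ} (a : Fin n → Kˣ) :
    Fin n → Lˣ :=
  fun i => Units.map f.toMonoidHom (a i)

/-- The `m`-fold Pfister form `⟨⟨u 0, …, u (m-1)⟩⟩ = ⟨1, -u 0⟩ ⊗ ⋯ ⊗ ⟨1, -u (m-1)⟩`,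
written diagonally: the entry at index `i` is `∏_{j ∈ bits i} (-u j)`. -/
def pfister {m : ℕ} (u : Fin m → Kˣ) : Fin (2 ^ m) → Kˣ :=
  fun i => ∏ j : Fin m, if ((i : ℕ)).testBit (j : ℕ) then -(u j) else 1

/-- The orthogonal sum of the `k` Pfister forms `⟨⟨c 0⟩⟩, …, ⟨⟨c (k-1)⟩⟩`. -/
def pfisterSum {k m : ℕ} (c : Fin k → Fin m → Kˣ) : Fin (k * 2 ^ m) → Kˣ :=
  fun i => pfister (c (finProdFinEquiv.symm i).1) (finProdFinEquiv.symm i).2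

/-- The Witt class of `q` lies in `I^m(K)`: since `I^m` is generated as a group by
`m`-fold Pfister forms, this means `q` plus a sum of `m`-fold Pfister forms is Witt
equivalent to a sum of `m`-fold Pfister forms. -/
def MemPowI (m : ℕ) {n : ℕ} (q : Fin n → Kˣ) : Prop :=
  ∃ (k k' : ℕ) (c : Fin k → Fin m → Kˣ) (c' : Fin k' → Fin m → Kˣ),
    WittEquiv (Fin.append q (pfisterSum c)) (pfisterSum c')

/-- `q` (with Witt class in `I^m`) has `m`-Pfister number at most `N`. -/
def PfisterNumberLE (m : ℕ) {n : ℕ} (q : Fin n → Kˣ) (N : ℕ) : Prop :=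
  ∃ (k : ℕ), k ≤ N ∧ ∃ c : Fin k → Fin m → Kˣ, WittEquiv q (pfisterSum c)

/-- The `u`-invariant of `K` is at most `u`: every anisotropic (diagonal) form has
dimension at most `u`. -/
def uInvLE (K : Type u) [Field K] (u : ℕ) : Prop :=
  ∀ (n : ℕ) (a : Fin n → Kˣ), IsAnisotropicD a → n ≤ u

/-- `q` becomes hyperbolic (Witt trivial) over `K`. -/
def IsWittTrivial {n : ℕ} (q : Fin n → Kˣ) : Prop :=
  WittEquiv q (Fin.elim0 : Fin 0 → Kˣ)

end SymbolLength

namespace SymbolLength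

/-- Abstract mod-2 Galois cohomology of a field `F` (char F ≠ 2), with coefficients
`μ₂`, indexed by the finite and infinite extensions of `F` inside a fixed algebraic
closure.  It carries restriction maps, symbols (cup products of classes in
`H^1 = L^*/(L^*)^2`), and the content of the Milnor conjecture: `H^n` is spanned by
symbols (via `e_n` of Pfister forms) and a sum of symbols vanishes exactly when the
corresponding sum of `n`-fold Pfister forms has Witt class in `I^{n+1}`. -/
structure Mod2Cohomology (F : Type u) [Field F] where
  H : ℕ → IntermediateField F (AlgebraicClosure F) → Type u
  ab : ∀ n K, AddCommGroup (H n K)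
  res : ∀ (n : ℕ) {K K' : IntermediateField F (AlgebraicClosure F)},
      K ≤ K' → H n K → H n K'
  res_add : ∀ (n : ℕ) {K K' : IntermediateField F (AlgebraicClosure F)} (h : K ≤ K') (x y : H n K),
      res n h (x + y) = res n h x + res n h y
  res_refl : ∀ (n : ℕ) (K : IntermediateField F (AlgebraicClosure F)) (x : H n K), res n (le_refl K) x = x
  res_trans : ∀ (n : ℕ) {K K' K'' : IntermediateField F (AlgebraicClosure F)} (h : K ≤ K') (h' : K' ≤ K'') (x : H n K),
      res n h' (res n h x) = res n (h.trans h') x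
  symbol : ∀ {n : ℕ} (K : IntermediateField F (AlgebraicClosure F)),
      (Fin n → (↥K)ˣ) → H n K
  res_symbol : ∀ {n : ℕ} {K K' : IntermediateField F (AlgebraicClosure F)} (h : K ≤ K') (a : Fin n → (↥K)ˣ),
      res n h (symbol K a)
        = symbol K' (fun i => Units.map (IntermediateField.inclusion h).toRingHom.toMonoidHom (a i))
  /-- Bloch–Kato / Milnor conjecture (surjectivity): every class is a sum of symbols. -/
  bloch_kato : ∀ (n : ℕ) (K : IntermediateField F (AlgebraicClosure F)) (α : H n K),
      ∃ (k : ℕ) (c : Fin k → Fin n → (↥K)ˣ), α = ∑ i, symbol K (c i)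
  /-- Milnor conjecture (injectivity of `e_n` on `I^n/I^{n+1}`): a sum of symbols is
  zero in `H^n` iff the corresponding sum of `n`-fold Pfister forms lies in `I^{n+1}`. -/
  milnor : ∀ (n : ℕ) (K : IntermediateField F (AlgebraicClosure F)) (k : ℕ) (c : Fin k → Fin n → (↥K)ˣ),
      (∑ i, symbol K (c i)) = 0 ↔ MemPowI (n + 1) (pfisterSum c)

attribute [instance] Mod2Cohomology.ab

end SymbolLength


namespace SLAux

variable {K : Type u} [Field K]

def qe {ι : Type} [Fintype ι] (a : ι → Kˣ) (x : ι → K) : K :=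
  ∑ i, (a i : K) * x i ^ 2

def Iso {ι : Type} {ι' : Type} [Fintype ι] [Fintype ι'] (a : ι → Kˣ) (b : ι' → Kˣ) : Prop :=
  ∃ f : (ι → K) ≃ₗ[K] (ι' → K), ∀ x, qe a x = qe b (f x)

def sm {ι : Type} (c : Kˣ) (a : ι → Kˣ) : ι → Kˣ := fun i => c * a i

def negF {ι : Type} (a : ι → Kˣ) : ι → Kˣ := fun i => -(a i)

variable {ι : Type} {ι' ι'' : Type} [Fintype ι] [Fintype ι'] [Fintype ι'']

theorem iso_refl (a : ι → Kˣ) : Iso a a := ⟨LinearEquiv.refl K _, fun _ => rfl⟩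

theorem Iso.symm {a : ι → Kˣ} {b : ι' → Kˣ} (h : Iso a b) : Iso b a := by
  obtain ⟨f, hf⟩ := h
  refine ⟨f.symm, fun x => ?_⟩
  have := hf (f.symm x)
  rw [f.apply_symm_apply] at this; exact this.symm

theorem Iso.trans {a : ι → Kˣ} {b : ι' → Kˣ} {c : ι'' → Kˣ} (h : Iso a b) (h' : Iso b c) :
    Iso a c := by
  obtain ⟨f, hf⟩ := h; obtain ⟨g, hg⟩ := h'
  exact ⟨f.trans g, fun x => (hf x).trans (hg (f x))⟩

theorem iso_reindex (e : ι ≃ ι') (a : ι' → Kˣ) : Iso (a ∘ e) a := by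
  refine ⟨LinearEquiv.funCongrLeft K K e.symm, fun x => ?_⟩
  simp only [qe, LinearEquiv.funCongrLeft_apply, LinearMap.funLeft_apply]
  exact Fintype.sum_equiv e _ _ (fun i => by simp)

theorem iso_of_eq {a b : ι → Kˣ} (h : a = b) : Iso a b := h ▸ iso_refl a

theorem iso_of_comp_eq (e : ι ≃ ι') (a : ι → Kˣ) (b : ι' → Kˣ) (h : ∀ i, a i = b (e i)) :
    Iso a b := by
  have : a = b ∘ e := funext h
  exact this ▸ iso_reindex e b

theorem qe_sum_elim {κ : Type} [Fintype κ] (a : ι → Kˣ) (b : κ → Kˣ) (z : ι ⊕ κ → K) :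
    qe (Sum.elim a b) z = qe a (z ∘ Sum.inl) + qe b (z ∘ Sum.inr) := by
  simp [qe, Fintype.sum_sum_type]

theorem qe_sm (c : Kˣ) (a : ι → Kˣ) (x : ι → K) : qe (sm c a) x = c * qe a x := by
  simp [qe, sm, Finset.mul_sum, mul_assoc]

theorem iso_add {κ κ' : Type} [Fintype κ] [Fintype κ'] {a : ι → Kˣ} {a' : ι' → Kˣ}
    {b : κ → Kˣ} {b' : κ' → Kˣ} (h : Iso a a') (h' : Iso b b') :
    Iso (Sum.elim a b) (Sum.elim a' b') := by
  obtain ⟨f, hf⟩ := h; obtain ⟨g, hg⟩ := h'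
  refine ⟨(LinearEquiv.sumArrowLequivProdArrow ι κ K K).trans
    ((LinearEquiv.prodCongr f g).trans (LinearEquiv.sumArrowLequivProdArrow ι' κ' K K).symm), fun z => ?_⟩
  rw [qe_sum_elim, qe_sum_elim, hf, hg]
  congr 1

theorem iso_sm (c : Kˣ) {a : ι → Kˣ} {b : ι' → Kˣ} (h : Iso a b) : Iso (sm c a) (sm c b) := by
  obtain ⟨f, hf⟩ := h
  exact ⟨f, fun x => by rw [qe_sm, qe_sm, hf]⟩

theorem iso_unit_sq (u : Kˣ) (a : ι → Kˣ) : Iso (sm (u * u) a) a := by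
  refine ⟨LinearEquiv.smulOfUnit u, fun x => ?_⟩
  simp only [qe, qe_sm, sm, LinearEquiv.smulOfUnit]
  apply Finset.sum_congr rfl
  intro i _
  simp [DistribMulAction.toLinearEquiv, Units.smul_def, smul_eq_mul]
  ring


def curryK {κ : Type} (ι : Type) [Fintype ι] [Fintype κ] :
    ((κ × ι) → K) ≃ₗ[K] (κ → ι → K) where
  toFun x := fun k i => x (k, i)
  invFun x := fun p => x p.1 p.2
  map_add' _ _ := rfl
  map_smul' _ _ := rfl
  left_inv _ := rfl
  right_inv _ := rfl

def curryK' {κ : Type} (ι : Type) [Fintype ι] [Fintype κ] :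
    ((κ × ι) → K) ≃ₗ[K] (ι → κ → K) where
  toFun x := fun i k => x (k, i)
  invFun x := fun p => x p.2 p.1
  map_add' _ _ := rfl
  map_smul' _ _ := rfl
  left_inv _ := rfl
  right_inv _ := rfl

theorem qe_prod {κ : Type} [Fintype κ] (g : κ → ι → Kˣ) (x : κ × ι → K) :
    qe (fun p : κ × ι => g p.1 p.2) x = ∑ k, qe (g k) (fun i => x (k, i)) := by
  simp [qe, Fintype.sum_prod_type]

theorem iso_pi {κ : Type} [Fintype κ] (g : κ → ι → Kˣ) (g' : κ → ι' → Kˣ)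
    (h : ∀ k, Iso (g k) (g' k)) :
    Iso (fun p : κ × ι => g p.1 p.2) (fun p : κ × ι' => g' p.1 p.2) := by
  choose f hf using h
  refine ⟨(curryK ι).trans ((LinearEquiv.piCongrRight f).trans (curryK ι').symm), fun x => ?_⟩
  rw [qe_prod, qe_prod]
  exact Finset.sum_congr rfl fun k _ => hf k _

theorem qe_prod_left {κ : Type} [Fintype κ] (v : κ → Kˣ) (q : ι → Kˣ) (x : κ × ι → K) :
    qe (fun p : κ × ι => v p.1 * q p.2) x = ∑ i, (q i : K) * qe v (fun k => x (k, i)) := by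
  rw [qe, Fintype.sum_prod_type_right]
  apply Finset.sum_congr rfl
  intro i _
  rw [qe, Finset.mul_sum]
  apply Finset.sum_congr rfl
  intro k _
  push_cast
  ring

theorem iso_tensor_left {κ κ' : Type} [Fintype κ] [Fintype κ'] {v : κ → Kˣ} {w : κ' → Kˣ}
    (q : ι → Kˣ) (h : Iso v w) :
    Iso (fun p : κ × ι => v p.1 * q p.2) (fun p : κ' × ι => w p.1 * q p.2) := by
  obtain ⟨f, hf⟩ := h
  refine ⟨(curryK' ι).trans ((LinearEquiv.piCongrRight fun _ => f).trans (curryK' ι).symm),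
    fun x => ?_⟩
  rw [qe_prod_left, qe_prod_left]
  exact Finset.sum_congr rfl fun i _ => by rw [hf]; rfl

theorem iso_of_matrix [DecidableEq ι] (a b : ι → Kˣ) (M : Matrix ι ι K) (hd : IsUnit M.det)
    (h : ∀ x, qe a (M.mulVec x) = qe b x) : Iso a b := by
  have hInv := M.invertibleOfIsUnitDet hd
  refine ⟨(M.toLinearEquiv' hInv).symm, fun y => ?_⟩
  have h1 : ∀ z, (M.toLinearEquiv' hInv) z = M.mulVec z := fun z => by
    change Matrix.toLin' M z = _
    rw [Matrix.toLin'_apply]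
  have := h ((M.toLinearEquiv' hInv).symm y)
  rw [← h1, LinearEquiv.apply_symm_apply] at this
  exact this


def Rep (a : ι → Kˣ) (d : Kˣ) : Prop := ∃ x, qe a x = (d : K)

def Round (a : ι → Kˣ) : Prop := ∀ d : Kˣ, Rep a d → Iso (sm d a) a

theorem rep_iso {a : ι → Kˣ} {b : ι' → Kˣ} (h : Iso a b) {d : Kˣ} (hd : Rep a d) : Rep b d := by
  obtain ⟨f, hf⟩ := h
  obtain ⟨x, hx⟩ := hd
  exact ⟨f x, by rw [← hf, hx]⟩

theorem round_iso {a : ι → Kˣ} {b : ι' → Kˣ} (h : Iso a b) (hr : Round a) : Round b := by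
  intro d hd
  exact ((iso_sm d h.symm).trans (hr d (rep_iso h.symm hd))).trans h

theorem qe_pair (s t : Kˣ) (x : Fin 2 → K) :
    qe ![s, t] x = (s : K) * x 0 ^ 2 + (t : K) * x 1 ^ 2 := by
  simp [qe, Fin.sum_univ_two]

/-- A binary form is isometric to `⟨c, s t c⟩` for any represented `c`. -/
theorem binary_rep (s t c : Kˣ) (x0 y0 : K) (h : (c : K) = s * x0 ^ 2 + t * y0 ^ 2) :
    Iso ![s, t] ![c, s * t * c] := by
  refine iso_of_matrix _ _ !![x0, (t : K) * y0; y0, -((s : K) * x0)] ?_ ?_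
  · rw [Matrix.det_fin_two_of]
    have : x0 * -((s : K) * x0) - (t : K) * y0 * y0 = -(c : K) := by rw [h]; ring
    rw [this]
    simp
  · intro x
    rw [qe_pair, qe_pair]
    have h0 : (!![x0, (t : K) * y0; y0, -((s : K) * x0)].mulVec x) 0
        = x0 * x 0 + (t : K) * y0 * x 1 := by
      simp [Matrix.mulVec, dotProduct, Fin.sum_univ_two, Matrix.vecHead, Matrix.vecTail]
    have h1 : (!![x0, (t : K) * y0; y0, -((s : K) * x0)].mulVec x) 1
        = y0 * x 0 + -((s : K) * x0) * x 1 := by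
      simp [Matrix.mulVec, dotProduct, Fin.sum_univ_two, Matrix.vecHead, Matrix.vecTail]
    rw [h0, h1]
    have hc : ((s * t * c : Kˣ) : K) = (s : K) * t * c := by push_cast; ring
    rw [hc, h]
    ring

/-- `⟨a, -a⟩` is isometric to `⟨1, -1⟩` (char ≠ 2). -/
theorem hyp_pair (h2 : (2 : K) ≠ 0) (a : Kˣ) : Iso ![a, -a] ![(1 : Kˣ), -1] := by
  have key : Iso ![(1 : Kˣ), -1] ![a, 1 * (-1) * a] := by
    refine binary_rep 1 (-1) a (((a : K) + 1) / 2) (((a : K) - 1) / 2) ?_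
    field_simp
    simp only [Units.val_one, Units.val_neg]
    ring
  have he : ![a, 1 * (-1) * a] = ![a, -a] := by
    funext i
    fin_cases i <;> simp
  rw [he] at key
  exact key.symm

/-- reindexing `ι ⊕ ι` as `Fin 2 × ι`. -/
def sumProdTwo (ι : Type) : ι ⊕ ι ≃ Fin 2 × ι where
  toFun := Sum.elim (fun i => (0, i)) (fun i => (1, i))
  invFun p := if p.1 = 0 then .inl p.2 else .inr p.2
  left_inv x := by rcases x with i | i <;> simp
  right_inv p := by
    rcases p with ⟨k, i⟩
    fin_cases k <;> simp

theorem iso_sum_elim_prod (v : Fin 2 → Kˣ) (q : ι → Kˣ) :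
    Iso (Sum.elim (sm (v 0) q) (sm (v 1) q)) (fun p : Fin 2 × ι => v p.1 * q p.2) := by
  refine iso_of_comp_eq (sumProdTwo ι) _ _ ?_
  rintro (i | i) <;> rfl

theorem iso_swap {κ : Type} [Fintype κ] (a : ι → Kˣ) (b : κ → Kˣ) :
    Iso (Sum.elim a b) (Sum.elim b a) := by
  refine iso_of_comp_eq (Equiv.sumComm ι κ) _ _ ?_
  rintro (i | i) <;> rfl

theorem sm_sum_elim {κ : Type} [Fintype κ] (c : Kˣ) (a : ι → Kˣ) (b : κ → Kˣ) :
    sm c (Sum.elim a b) = Sum.elim (sm c a) (sm c b) := by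
  funext i; rcases i with i | i <;> rfl

theorem sm_sm (c d : Kˣ) (a : ι → Kˣ) : sm c (sm d a) = sm (c * d) a := by
  funext i; simp [sm, mul_assoc]

theorem round_step {a : Kˣ} {q : ι → Kˣ} (hr : Round q) : Round (Sum.elim q (sm a q)) := by
  intro d hd
  obtain ⟨z, hz⟩ := hd
  rw [qe_sum_elim] at hz
  rw [qe_sm] at hz
  set s := qe q (z ∘ Sum.inl) with hs_def
  set t := qe q (z ∘ Sum.inr) with ht_def
  rw [sm_sum_elim, sm_sm]
  by_cases ht : t = 0
  · -- d = s, represented by q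
    have hsd : s = (d : K) := by rw [← hz, ht]; ring
    have hrep : Rep q d := ⟨z ∘ Sum.inl, hsd⟩
    have h1 : Iso (sm d q) q := hr d hrep
    have h2 : Iso (sm (d * a) q) (sm a q) := by
      have := iso_sm a h1
      rw [sm_sm] at this
      rw [show d * a = a * d from mul_comm d a]
      exact this
    exact iso_add h1 h2
  · by_cases hs : s = 0
    · -- d = a * t
      have htd : t = ((a⁻¹ * d : Kˣ) : K) := by
        push_cast
        field_simp
        rw [← hz, hs]; ring
      have hrep : Rep q (a⁻¹ * d) := ⟨z ∘ Sum.inr, htd⟩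
      have h1 : Iso (sm (a⁻¹ * d) q) q := hr _ hrep
      have hd1 : Iso (sm d q) (sm a q) := by
        have := iso_sm a h1
        rw [sm_sm, show a * (a⁻¹ * d) = d from by rw [mul_inv_cancel_left]] at this
        exact this
      have hd2 : Iso (sm (d * a) q) q := by
        have := iso_sm (a * a) h1
        rw [sm_sm, show a * a * (a⁻¹ * d) = d * a from by rw [mul_assoc, mul_inv_cancel_left, mul_comm]] at this
        exact this.trans (iso_unit_sq a q)
      exact (iso_add hd1 hd2).trans (iso_swap _ _)
    · -- both nonzero
      set su : Kˣ := Units.mk0 s hs with hsu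
      set tu : Kˣ := Units.mk0 t ht with htu
      have hrs : Rep q su := ⟨z ∘ Sum.inl, rfl⟩
      have hrt : Rep q tu := ⟨z ∘ Sum.inr, rfl⟩
      have h1 : Iso (sm su q) q := hr su hrs
      have h2 : Iso (sm tu q) q := hr tu hrt
      have hbin : Iso ![su, a * tu] ![d, su * (a * tu) * d] := by
        refine binary_rep su (a * tu) d 1 1 ?_
        push_cast
        rw [show ((su : K)) = s from rfl, show ((tu : K)) = t from rfl, ← hz]; ring
      -- φ ≅ su•q ⊥ (a tu)•q
      have step1 : Iso (Sum.elim q (sm a q)) (Sum.elim (sm su q) (sm (a * tu) q)) := by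
        refine iso_add h1.symm ?_
        have := iso_sm a h2
        rw [sm_sm] at this
        exact this.symm
      have step2 : Iso (Sum.elim (sm su q) (sm (a * tu) q))
          (fun p : Fin 2 × ι => (![su, a * tu] : Fin 2 → Kˣ) p.1 * q p.2) := by
        have := iso_sum_elim_prod ![su, a * tu] q
        simpa using this
      have step3 := iso_tensor_left (w := ![d, su * (a * tu) * d]) q hbin
      have step4 : Iso (fun p : Fin 2 × ι => (![d, su * (a * tu) * d] : Fin 2 → Kˣ) p.1 * q p.2)
          (Sum.elim (sm d q) (sm (su * (a * tu) * d) q)) := by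
        have := (iso_sum_elim_prod ![d, su * (a * tu) * d] q).symm
        simpa using this
      have step5 : Iso (sm (su * (a * tu) * d) q) (sm (d * a) q) := by
        have e1 : sm (su * (a * tu) * d) q = sm (d * a) (sm su (sm tu q)) := by
          rw [sm_sm, sm_sm]
          congr 1
          simp [mul_comm, mul_left_comm, mul_assoc]
        rw [e1]
        exact iso_sm (d * a) ((iso_sm su h2).trans h1)
      exact ((((step1.trans step2).trans step3).trans step4).trans
        (iso_add (iso_refl (sm d q)) step5)).symm

section Pfister

open SymbolLength

def evenOdd (N : ℕ) : Fin N ⊕ Fin N ≃ Fin (2 * N) where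
  toFun := Sum.elim (fun j => ⟨2 * j.val, by omega⟩) (fun j => ⟨2 * j.val + 1, by omega⟩)
  invFun i := if h : i.val % 2 = 0 then .inl ⟨i.val / 2, by omega⟩ else .inr ⟨i.val / 2, by omega⟩
  left_inv x := by
    rcases x with j | j
    · dsimp only [Sum.elim_inl]
      rw [dif_pos (by omega)]
      congr 1
      exact Fin.ext (by simp; try omega)
    · dsimp only [Sum.elim_inr]
      rw [dif_neg (by omega)]
      congr 1
      exact Fin.ext (by simp; try omega)
  right_inv i := by
    dsimp only
    by_cases h : i.val % 2 = 0
    · rw [dif_pos h, Sum.elim_inl]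
      exact Fin.ext (by simp; try omega)
    · rw [dif_neg h, Sum.elim_inr]
      exact Fin.ext (by simp; try omega)

theorem pow_succ_fact (m : ℕ) : 2 * 2 ^ m = 2 ^ (m + 1) := by rw [pow_succ]; ring

theorem pfister_step_val {m : ℕ} (u : Fin (m + 1) → Kˣ) (i : Fin (2 ^ (m + 1)))
    (j : Fin (2 ^ m)) (hj : (j : ℕ) = i.val / 2) :
    pfister u i = (if Nat.testBit i.val 0 then -(u 0) else 1) *
      pfister (u ∘ Fin.succ) j := by
  unfold SymbolLength.pfister
  rw [Fin.prod_univ_succ]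
  congr 1
  apply Finset.prod_congr rfl
  intro t _
  show (if Nat.testBit i.val (t.val + 1) then -(u (Fin.succ t)) else 1) = _
  rw [Nat.testBit_succ, ← hj]
  rfl

theorem pfister_even {m : ℕ} (u : Fin (m + 1) → Kˣ) (i : Fin (2 ^ (m + 1))) (j : Fin (2 ^ m))
    (h : i.val = 2 * j.val) : pfister u i = pfister (u ∘ Fin.succ) j := by
  rw [pfister_step_val u i j (by omega)]
  have h0 : Nat.testBit i.val 0 = false := by simp [Nat.testBit_zero]; omega
  rw [h0, if_neg (by simp), one_mul]

theorem pfister_odd {m : ℕ} (u : Fin (m + 1) → Kˣ) (i : Fin (2 ^ (m + 1))) (j : Fin (2 ^ m))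
    (h : i.val = 2 * j.val + 1) : pfister u i = -(u 0) * pfister (u ∘ Fin.succ) j := by
  rw [pfister_step_val u i j (by omega)]
  have h0 : Nat.testBit i.val 0 = true := by simp [Nat.testBit_zero]; omega
  rw [h0, if_pos (by simp)]

theorem pfister_split {m : ℕ} (u : Fin (m + 1) → Kˣ) :
    Iso (pfister u)
      (Sum.elim (pfister (u ∘ Fin.succ)) (sm (-(u 0)) (pfister (u ∘ Fin.succ)))) := by
  refine (iso_of_comp_eq ((evenOdd (2 ^ m)).trans (finCongr (pow_succ_fact m)))
    _ (pfister u) ?_).symm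
  rintro (j | j)
  · rw [Sum.elim_inl]
    exact (pfister_even u _ j (by simp [evenOdd])).symm
  · rw [Sum.elim_inr]
    exact (pfister_odd u _ j (by simp [evenOdd])).symm

theorem pfister_round_rep (m : ℕ) (u : Fin m → Kˣ) :
    Round (pfister u) ∧ Rep (pfister u) (1 : Kˣ) := by
  induction m with
  | zero =>
    have hval : ∀ i : Fin (2 ^ 0), pfister u i = 1 := by
      intro i
      simp [SymbolLength.pfister]
    have hqe : ∀ x : Fin (2 ^ 0) → K, qe (pfister u) x = x 0 ^ 2 := by
      intro x
      rw [qe]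
      rw [show (Finset.univ : Finset (Fin (2 ^ 0))) = {0} from rfl]
      rw [Finset.sum_singleton, hval]
      simp
    constructor
    · intro d hd
      obtain ⟨x, hx⟩ := hd
      rw [hqe] at hx
      have hx0 : x 0 ≠ 0 := by
        intro h
        rw [h] at hx
        exact d.ne_zero (by simpa using hx.symm)
      set xu : Kˣ := Units.mk0 (x 0) hx0 with hxu
      have hdu : d = xu * xu := by
        ext
        show (d : K) = x 0 * x 0
        rw [← hx]; ring
      rw [hdu]
      exact iso_unit_sq xu (pfister u)
    · exact ⟨fun _ => 1, by rw [hqe]; simp⟩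
  | succ m ih =>
    set q := pfister (u ∘ Fin.succ) with hq
    have ihq := ih (u ∘ Fin.succ)
    have hsplit := pfister_split u
    have hround : Round (Sum.elim q (sm (-(u 0)) q)) := round_step ihq.1
    constructor
    · exact round_iso hsplit.symm hround
    · refine rep_iso hsplit.symm ?_
      obtain ⟨x, hx⟩ := ihq.2
      refine ⟨Sum.elim x 0, ?_⟩
      rw [qe_sum_elim]
      have hz : qe (sm (-(u 0)) q) ((Sum.elim x (0 : Fin (2 ^ m) → K)) ∘ Sum.inr) = 0 := by
        rw [qe_sm]
        have : ((Sum.elim x (0 : Fin (2 ^ m) → K)) ∘ Sum.inr) = (fun _ => (0 : K)) := rfl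
        rw [this]
        simp [qe]
      rw [hz]
      have : ((Sum.elim x (0 : Fin (2 ^ m) → K)) ∘ Sum.inl) = x := rfl
      rw [this, hx, add_zero]

def Hyp {ι : Type} [Fintype ι] (a : ι → Kˣ) : Prop :=
  ∃ (l : ℕ) (b : Fin l → Kˣ), Iso a (Sum.elim b (negF b))

theorem hyp_iso {a : ι → Kˣ} {b : ι' → Kˣ} (h : Iso a b) (hb : Hyp b) : Hyp a := by
  obtain ⟨l, b0, hb0⟩ := hb
  exact ⟨l, b0, h.trans hb0⟩

theorem hyp_sm (c : Kˣ) {a : ι → Kˣ} (h : Hyp a) : Hyp (sm c a) := by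
  obtain ⟨l, b0, hb0⟩ := h
  refine ⟨l, sm c b0, (iso_sm c hb0).trans (iso_of_eq ?_)⟩
  funext i
  rcases i with i | i
  · rfl
  · show c * -(b0 i) = -(c * b0 i)
    rw [mul_neg]

theorem hyp_sum {κ : Type} [Fintype κ] {a : ι → Kˣ} {b : κ → Kˣ}
    (ha : Hyp a) (hb : Hyp b) : Hyp (Sum.elim a b) := by
  obtain ⟨l1, b1, h1⟩ := ha
  obtain ⟨l2, b2, h2⟩ := hb
  refine ⟨l1 + l2, Fin.append b1 b2, (iso_add h1 h2).trans ?_⟩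
  have e1 : Iso (Sum.elim (Sum.elim b1 (negF b1)) (Sum.elim b2 (negF b2)))
      (Sum.elim (Sum.elim b1 b2) (Sum.elim (negF b1) (negF b2))) := by
    refine iso_of_comp_eq (Equiv.sumSumSumComm (Fin l1) (Fin l1) (Fin l2) (Fin l2)) _ _ ?_
    rintro ((i | i) | (i | i)) <;> rfl
  refine e1.trans ?_
  refine iso_of_comp_eq (Equiv.sumCongr finSumFinEquiv finSumFinEquiv) _ _ ?_
  rintro ((i | i) | (i | i)) <;>
    simp [negF, Fin.append_left, Fin.append_right]

theorem hyp_empty [IsEmpty ι] (a : ι → Kˣ) : Hyp a := by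
  refine ⟨0, Fin.elim0, iso_of_comp_eq (Equiv.equivOfIsEmpty ι (Fin 0 ⊕ Fin 0)) _ _ ?_⟩
  intro i
  exact (IsEmpty.false i).elim

def succSplit (k N : ℕ) : (Fin k × Fin N) ⊕ Fin N ≃ Fin (k + 1) × Fin N where
  toFun := Sum.elim (fun p => (p.1.castSucc, p.2)) (fun j => (Fin.last k, j))
  invFun p := if h : p.1.val < k then .inl (⟨p.1.val, h⟩, p.2) else .inr p.2
  left_inv x := by
    rcases x with ⟨i, j⟩ | j
    · dsimp only [Sum.elim_inl]
      rw [dif_pos (by simpa using i.isLt)]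
      rfl
    · dsimp only [Sum.elim_inr]
      rw [dif_neg (by simp)]
  right_inv p := by
    rcases p with ⟨i, j⟩
    dsimp only
    by_cases h : i.val < k
    · rw [dif_pos h, Sum.elim_inl]
      have : (⟨i.val, h⟩ : Fin k).castSucc = i := Fin.ext rfl
      rw [this]
    · rw [dif_neg h, Sum.elim_inr]
      have : i = Fin.last k := Fin.ext (by have := i.isLt; simp; omega)
      rw [this]

theorem hyp_pi {N : ℕ} : ∀ (k : ℕ) (g : Fin k → Fin N → Kˣ), (∀ i, Hyp (g i)) →
    Hyp (fun p : Fin k × Fin N => g p.1 p.2) := by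
  intro k
  induction k with
  | zero => intro g _; exact hyp_empty _
  | succ k ih =>
    intro g hg
    have hsum : Hyp (Sum.elim (fun p : Fin k × Fin N => g p.1.castSucc p.2) (g (Fin.last k))) :=
      hyp_sum (ih _ (fun i => hg i.castSucc)) (hg (Fin.last k))
    refine hyp_iso (iso_of_comp_eq (succSplit k N) _ _ ?_).symm hsum
    rintro (⟨i, j⟩ | j) <;> rfl

theorem pfister_hyp : ∀ (m : ℕ) (u : Fin m → Kˣ),
    (∃ x : Fin (2 ^ m) → K, x ≠ 0 ∧ qe (pfister u) x = 0) → Hyp (pfister u) := by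
  intro m
  induction m with
  | zero =>
    intro u ⟨x, hx, hqe⟩
    exfalso
    apply hx
    have hval : pfister u 0 = 1 := by simp [SymbolLength.pfister]
    rw [qe, show (Finset.univ : Finset (Fin (2 ^ 0))) = {0} from rfl,
      Finset.sum_singleton, hval] at hqe
    funext i
    have hi : i = 0 := Fin.ext (by omega)
    rw [hi]
    have : x 0 ^ 2 = 0 := by simpa using hqe
    exact pow_eq_zero_iff (by norm_num) |>.mp this
  | succ m ih =>
    intro u ⟨x, hx, hqe⟩
    set q := pfister (u ∘ Fin.succ) with hq
    have hsplit := pfister_split u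
    obtain ⟨f, hf⟩ := id hsplit
    set z := f x with hzdef
    have hz0 : z ≠ 0 := by
      intro h
      exact hx (f.map_eq_zero_iff.mp h)
    have hqz : qe (Sum.elim q (sm (-(u 0)) q)) z = 0 := by rw [← hf, hqe]
    rw [qe_sum_elim, qe_sm] at hqz
    set x1 := z ∘ Sum.inl with hx1
    set y1 := z ∘ Sum.inr with hy1
    by_cases hqiso : ∃ w : Fin (2 ^ m) → K, w ≠ 0 ∧ qe q w = 0
    · have hyq : Hyp q := ih _ hqiso
      exact hyp_iso hsplit (hyp_sum hyq (hyp_sm _ hyq))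
    · push_neg at hqiso
      have haniso : ∀ w : Fin (2 ^ m) → K, qe q w = 0 → w = 0 := by
        intro w hw
        by_contra hne
        exact (hqiso w hne) hw
      have hx1ne : x1 ≠ 0 := by
        intro h
        rw [h] at hqz
        have h0 : qe q (0 : Fin (2 ^ m) → K) = 0 := by simp [qe]
        rw [h0] at hqz
        have : qe q y1 = 0 := by
          have hne : ((-(u 0) : Kˣ) : K) ≠ 0 := Units.ne_zero _
          field_simp at hqz
          simpa using hqz
        apply hz0
        have hy0 : y1 = 0 := haniso _ this
        funext i
        rcases i with i | i
        · exact congrFun h i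
        · exact congrFun hy0 i
      have hy1ne : y1 ≠ 0 := by
        intro h
        rw [h] at hqz
        have h0 : qe q (0 : Fin (2 ^ m) → K) = 0 := by simp [qe]
        rw [h0, mul_zero, add_zero] at hqz
        exact hx1ne (haniso _ hqz)
      have hs : qe q x1 ≠ 0 := fun h => hx1ne (haniso _ h)
      have ht : qe q y1 ≠ 0 := fun h => hy1ne (haniso _ h)
      set su : Kˣ := Units.mk0 _ hs with hsu
      set tu : Kˣ := Units.mk0 _ ht with htu
      have hround := (pfister_round_rep m (u ∘ Fin.succ)).1
      have h1 : Iso (sm su q) q := hround su ⟨x1, rfl⟩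
      have h2 : Iso (sm tu q) q := hround tu ⟨y1, rfl⟩
      have hcast : ((-(u 0) : Kˣ) : K) = -((u 0 : Kˣ) : K) := by simp
      have key : u 0 * tu = su := by
        ext
        show ((u 0 : Kˣ) : K) * qe q y1 = qe q x1
        rw [hcast] at hqz
        linear_combination -hqz
      have hu0 : -(u 0) = (-1 : Kˣ) * su * tu⁻¹ := by
        rw [← key, mul_assoc, mul_inv_cancel_right, neg_one_mul]
      have hiso2 : Iso (sm (-(u 0)) q) (negF q) := by
        rw [hu0]
        have e1 : sm (-1 * su * tu⁻¹) q = sm (-1) (sm su (sm tu⁻¹ q)) := by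
          rw [sm_sm, sm_sm]
        rw [e1]
        have htinv : Iso (sm tu⁻¹ q) q := by
          have := iso_sm tu⁻¹ h2
          rw [sm_sm, inv_mul_cancel] at this
          have e2 : sm 1 q = q := by funext i; simp [sm]
          rw [e2] at this
          exact this.symm
        have : Iso (sm (-1) (sm su (sm tu⁻¹ q))) (sm (-1) q) :=
          iso_sm _ ((iso_sm su htinv).trans h1)
        refine this.trans (iso_of_eq ?_)
        funext i
        show (-1 : Kˣ) * q i = -(q i)
        simp
      exact hyp_iso hsplit ⟨2 ^ m, q, iso_add (iso_refl q) hiso2⟩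

end Pfister

section Final

open SymbolLength

theorem iso_card {a : ι → Kˣ} {b : ι' → Kˣ} (h : Iso a b) :
    Fintype.card ι = Fintype.card ι' := by
  obtain ⟨f, -⟩ := h
  have hfr := f.finrank_eq
  rwa [Module.finrank_fintype_fun_eq_card, Module.finrank_fintype_fun_eq_card] at hfr

theorem qe_eq_qeval {N : ℕ} (a : Fin N → Kˣ) (x : Fin N → K) : qe a x = qeval a x := rfl

theorem iso_isIsometric {N : ℕ} {a b : Fin N → Kˣ} (h : Iso a b) : IsIsometric a b := by
  obtain ⟨f, hf⟩ := h
  refine ⟨LinearMap.toMatrix' (f.symm : (Fin N → K) →ₗ[K] (Fin N → K)), ?_, ?_⟩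
  · have := LinearEquiv.isUnit_det f.symm (Pi.basisFun K (Fin N)) (Pi.basisFun K (Fin N))
    rwa [LinearMap.toMatrix_eq_toMatrix'] at this
  · intro x
    have hmv : (LinearMap.toMatrix'
        (f.symm : (Fin N → K) →ₗ[K] (Fin N → K))).mulVec x = f.symm x := by
      rw [← Matrix.toLin'_apply, Matrix.toLin'_toMatrix']
      rfl
    show qe a ((LinearMap.toMatrix' (f.symm : (Fin N → K) →ₗ[K] (Fin N → K))).mulVec x) = qe b x
    rw [hmv]
    have hh := hf (f.symm x)
    rw [f.apply_symm_apply] at hh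
    exact hh

def pairEquiv (l : ℕ) : Fin l ⊕ Fin l ≃ Fin l × Fin 2 where
  toFun := Sum.elim (fun i => (i, 0)) (fun i => (i, 1))
  invFun p := if p.2.val = 0 then .inl p.1 else .inr p.1
  left_inv x := by rcases x with i | i <;> rfl
  right_inv p := by
    rcases p with ⟨i, t⟩
    dsimp only
    by_cases h : t.val = 0
    · rw [if_pos h, Sum.elim_inl]
      have : t = 0 := Fin.ext h
      rw [this]
    · rw [if_neg h, Sum.elim_inr]
      have : t = 1 := Fin.ext (by have := t.isLt; omega)
      rw [this]

def interleave (l : ℕ) : Fin l × Fin 2 ≃ Fin (2 * l) where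
  toFun p := ⟨2 * p.1.val + p.2.val, by have h1 := p.1.isLt; have h2 := p.2.isLt; omega⟩
  invFun j := (⟨j.val / 2, by have := j.isLt; omega⟩, ⟨j.val % 2, by omega⟩)
  left_inv p := by
    rcases p with ⟨i, t⟩
    have ht := t.isLt
    dsimp only
    congr 1 <;> exact Fin.ext (by simp; omega)
  right_inv j := by
    dsimp only
    exact Fin.ext (by simp; omega)

theorem sum_neg_iso_hyp (h2 : (2 : K) ≠ 0) (l : ℕ) (b : Fin l → Kˣ) :
    Iso (Sum.elim b (negF b)) (SymbolLength.hyp K l) := by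
  have s1 : Iso (Sum.elim b (negF b))
      (fun p : Fin l × Fin 2 => (![b p.1, -(b p.1)] : Fin 2 → Kˣ) p.2) := by
    refine iso_of_comp_eq (pairEquiv l) _ _ ?_
    rintro (i | i) <;> rfl
  have s2 : Iso (fun p : Fin l × Fin 2 => (![b p.1, -(b p.1)] : Fin 2 → Kˣ) p.2)
      (fun p : Fin l × Fin 2 => (![(1 : Kˣ), -1] : Fin 2 → Kˣ) p.2) := by
    have := iso_pi (fun i : Fin l => (![b i, -(b i)] : Fin 2 → Kˣ))
      (fun _ : Fin l => (![(1 : Kˣ), -1] : Fin 2 → Kˣ)) (fun i => hyp_pair h2 (b i))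
    exact this
  have s3 : Iso (fun p : Fin l × Fin 2 => (![(1 : Kˣ), -1] : Fin 2 → Kˣ) p.2)
      (SymbolLength.hyp K l) := by
    refine iso_of_comp_eq (interleave l) _ _ ?_
    rintro ⟨i, t⟩
    fin_cases t
    · show (1 : Kˣ) = SymbolLength.hyp K l _
      unfold SymbolLength.hyp
      rw [if_pos ?_]
      show ((⟨2 * i.val + 0, _⟩ : Fin (2 * l)) : ℕ) % 2 = 0
      simp
    · show (-1 : Kˣ) = SymbolLength.hyp K l _
      unfold SymbolLength.hyp
      rw [if_neg ?_]
      show ¬ ((⟨2 * i.val + 1, _⟩ : Fin (2 * l)) : ℕ) % 2 = 0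
      simp [Nat.add_mul_mod_self_left]
  exact (s1.trans s2).trans s3

theorem append_val_left {p q : ℕ} (f : Fin p → Kˣ) (g : Fin q → Kˣ) (i : Fin (p + q))
    (hi : i.val < p) : Fin.append f g i = f ⟨i.val, hi⟩ := by
  have h : i = Fin.castAdd q ⟨i.val, hi⟩ := Fin.ext rfl
  rw [show Fin.append f g i = Fin.append f g (Fin.castAdd q ⟨i.val, hi⟩) from congrArg _ h,
    Fin.append_left]

theorem append_val_right {p q : ℕ} (f : Fin p → Kˣ) (g : Fin q → Kˣ) (i : Fin (p + q))
    (hi : p ≤ i.val) : Fin.append f g i = g ⟨i.val - p, by have := i.isLt; omega⟩ := by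
  have h : i = Fin.natAdd p ⟨i.val - p, by have := i.isLt; omega⟩ := Fin.ext (by simp; omega)
  rw [show Fin.append f g i = Fin.append f g (Fin.natAdd p ⟨i.val - p, by have := i.isLt; omega⟩)
    from congrArg _ h, Fin.append_right]

theorem aniso_of_equiv {L : Type u} [Field L] (e : K ≃+* L) {N : ℕ} (a : Fin N → Kˣ)
    (h : IsAnisotropicD a) :
    IsAnisotropicD (fun i => Units.map (e : K →* L) (a i)) := by
  intro x hx
  have hq : qeval a (fun i => e.symm (x i)) = 0 := by
    apply e.injective
    rw [map_zero, ← hx]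
    unfold SymbolLength.qeval
    rw [map_sum]
    apply Finset.sum_congr rfl
    intro i _
    rw [map_mul, map_pow, e.apply_symm_apply]
    rfl
  have h0 := h _ hq
  funext i
  have hxi : e.symm (x i) = 0 := congrFun h0 i
  have := congrArg e hxi
  rwa [e.apply_symm_apply, map_zero] at this

theorem uInvLE_of_equiv {L : Type u} [Field L] (e : K ≃+* L) (N : ℕ)
    (h : SymbolLength.uInvLE L N) : SymbolLength.uInvLE K N := fun d a ha =>
  h d (fun i => Units.map (e : K →* L) (a i)) (aniso_of_equiv e a ha)

end Final

end SLAux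


set_option maxHeartbeats 2000000 in
open SymbolLength in
/-- If `F` has characteristic `0` and `u(F) ≤ 2^n`, then `H^m(F, μ₂) = 0` for all
`m > n`; i.e. `cd₂(F) ≤ n`. -/
theorem vanishing_of_uInv_le (F : Type u) [Field F] [CharZero F]
    (C : Mod2Cohomology F) (n : ℕ) (hu : uInvLE F (2 ^ n)) :
    ∀ m : ℕ, n < m → ∀ α : C.H m ⊥, α = 0 := by
  intro m hm α
  obtain ⟨k, c, hα⟩ := C.bloch_kato m ⊥ α
  rw [hα, C.milnor]
  haveI : CharZero ↥(⊥ : IntermediateField F (AlgebraicClosure F)) :=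
    RingHom.charZero (IntermediateField.botEquiv F (AlgebraicClosure F)).toRingEquiv.toRingHom
  have h2 : (2 : ↥(⊥ : IntermediateField F (AlgebraicClosure F))) ≠ 0 := two_ne_zero
  have huL : uInvLE ↥(⊥ : IntermediateField F (AlgebraicClosure F)) (2 ^ n) :=
    SLAux.uInvLE_of_equiv (IntermediateField.botEquiv F (AlgebraicClosure F)).toRingEquiv _ hu
  have hpow : (2 : ℕ) ^ n < 2 ^ m := Nat.pow_lt_pow_right one_lt_two hm
  have hhyp : ∀ i, SLAux.Hyp (pfister (c i)) := by
    intro i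
    apply SLAux.pfister_hyp
    by_contra hno
    push_neg at hno
    have haniso : IsAnisotropicD (pfister (c i)) := by
      intro x hx
      by_contra hxne
      exact hno x hxne hx
    have hle := huL _ _ haniso
    omega
  have hprodIso : SLAux.Iso (pfisterSum c)
      (fun p : Fin k × Fin (2 ^ m) => pfister (c p.1) p.2) :=
    SLAux.iso_of_comp_eq finProdFinEquiv.symm _ _ (fun i => rfl)
  have hhypSum : SLAux.Hyp (pfisterSum c) :=
    SLAux.hyp_iso hprodIso (SLAux.hyp_pi k _ hhyp)
  obtain ⟨l', b, hbIso⟩ := hhypSum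
  have hcard : k * 2 ^ m = l' + l' := by
    have hc := SLAux.iso_card hbIso
    simpa using hc
  unfold MemPowI WittEquiv
  have hdim : (k * 2 ^ m + 0 * 2 ^ (m + 1)) + 2 * 0 = 0 * 2 ^ (m + 1) + 2 * l' := by omega
  refine ⟨0, 0, fun i => Fin.elim0 i, fun i => Fin.elim0 i, 0, l', hdim, ?_⟩
  apply SLAux.iso_isIsometric
  have hjlt : ∀ j : Fin (0 * 2 ^ (m + 1) + 2 * l'), j.val < k * 2 ^ m := by
    intro j
    have := j.isLt
    omega
  have sLHS : SLAux.Iso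
      ((Fin.append (Fin.append (pfisterSum c) (pfisterSum (fun i => Fin.elim0 i : Fin 0 → Fin (m + 1) → (↥(⊥ : IntermediateField F (AlgebraicClosure F)))ˣ)))
        (hyp (↥(⊥ : IntermediateField F (AlgebraicClosure F))) 0)) ∘ Fin.cast hdim.symm)
      (pfisterSum c) := by
    refine SLAux.iso_of_comp_eq
      ⟨fun j => ⟨j.val, hjlt j⟩, fun j => ⟨j.val, by have := j.isLt; omega⟩,
        fun j => rfl, fun j => rfl⟩ _ _ ?_
    intro j
    have p1 : j.val < k * 2 ^ m + 0 * 2 ^ (m + 1) := by have := hjlt j; omega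
    show Fin.append (Fin.append (pfisterSum c) (pfisterSum (fun i => Fin.elim0 i : Fin 0 → Fin (m + 1) → (↥(⊥ : IntermediateField F (AlgebraicClosure F)))ˣ)))
        (hyp (↥(⊥ : IntermediateField F (AlgebraicClosure F))) 0) (Fin.cast hdim.symm j)
      = pfisterSum c ⟨j.val, hjlt j⟩
    have e1 : Fin.cast hdim.symm j = Fin.castAdd (2 * 0) ⟨j.val, p1⟩ := Fin.ext rfl
    rw [e1, Fin.append_left]
    have e2 : (⟨j.val, p1⟩ : Fin (k * 2 ^ m + 0 * 2 ^ (m + 1)))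
        = Fin.castAdd (0 * 2 ^ (m + 1)) ⟨j.val, hjlt j⟩ := Fin.ext rfl
    rw [e2, Fin.append_left]
  have sRHS : SLAux.Iso (hyp (↥(⊥ : IntermediateField F (AlgebraicClosure F))) l')
      (Fin.append (pfisterSum (fun i => Fin.elim0 i : Fin 0 → Fin (m + 1) → (↥(⊥ : IntermediateField F (AlgebraicClosure F)))ˣ))
        (hyp (↥(⊥ : IntermediateField F (AlgebraicClosure F))) l')) := by
    refine SLAux.iso_of_comp_eq
      ⟨fun j => ⟨j.val, by have := j.isLt; omega⟩, fun j => ⟨j.val, by have := j.isLt; omega⟩,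
        fun j => rfl, fun j => rfl⟩ _ _ ?_
    intro j
    have p1 : j.val < 0 * 2 ^ (m + 1) + 2 * l' := by have := j.isLt; omega
    show hyp (↥(⊥ : IntermediateField F (AlgebraicClosure F))) l' j
      = Fin.append (pfisterSum (fun i => Fin.elim0 i : Fin 0 → Fin (m + 1) → (↥(⊥ : IntermediateField F (AlgebraicClosure F)))ˣ))
        (hyp (↥(⊥ : IntermediateField F (AlgebraicClosure F))) l') ⟨j.val, p1⟩
    have e3 : (⟨j.val, p1⟩ : Fin (0 * 2 ^ (m + 1) + 2 * l'))
        = Fin.natAdd (0 * 2 ^ (m + 1)) ⟨j.val - 0 * 2 ^ (m + 1), by have := j.isLt; omega⟩ :=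
      Fin.ext (by simp; try omega)
    rw [e3, Fin.append_right]
    congr 1
    exact Fin.ext (by simp; try omega)
  exact ((sLHS.trans hbIso).trans (SLAux.sum_neg_iso_hyp h2 l' b)).trans sRHS
end

section
/- Suppose H' is a presentable Abelian F-functor with presentation A_1 →^g A_0 →^f H' → 0, H is an Abelian F-functor, and φ: H' → H is a morphism injective on L-points for every field extension L/F. If α ∈ H(F) is the image under φ of α' ∈ H'(F) and ã ∈ A_0(F) is a preimage of α' under f, then the fiber X = g^{-1}(ã) is a generic splitting scheme for α: for every field extension L/F, X(L) ≠ ∅ if and only if α_L = 0. -/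
universe u

open CategoryTheory Opposite

namespace PresentableFunctors

variable (T : Type u) [CommRing T]

/-- The category of commutative `T`-algebras, as commutative rings under `T`. -/
abbrev CAlg := Under (CommRingCat.of T)

/-- An Abelian `T`-functor: a functor from commutative `T`-algebras to Abelian
groups. -/
abbrev AbFunctor := CAlg T ⥤ AddCommGrpCat.{u}

/-- An Abelian `T`-functor is affine if its underlying set-valued functor is
representable by a (spectrum of a) commutative `T`-algebra, i.e. if it is an affine
`T`-group scheme. -/
def IsAffineGroup (A : AbFunctor T) : Prop :=
  ∃ R : CAlg T, Nonempty ((A ⋙ forget AddCommGrpCat) ≅ coyoneda.obj (op R))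

/-- A presentation of an Abelian `T`-functor `H`: affine `T`-group schemes `A₁, A₀`
and an exact sequence `A₁ → A₀ → H → 0` (exactness evaluated at every
`T`-algebra). -/
structure Presentation (H : AbFunctor T) where
  A₁ : AbFunctor T
  A₀ : AbFunctor T
  affine₁ : IsAffineGroup T A₁
  affine₀ : IsAffineGroup T A₀
  g : A₁ ⟶ A₀
  f : A₀ ⟶ H
  exact : ∀ S : CAlg T, Function.Exact (g.app S) (f.app S)
  surj : ∀ S : CAlg T, Function.Surjective (f.app S)

/-- A presentable Abelian `T`-functor. -/
def IsPresentable (H : AbFunctor T) : Prop := Nonempty (Presentation T H)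

end PresentableFunctors

namespace PresentableFunctors

open CategoryTheory

variable (F : Type u) [CommRing F]

/-- `F` as the initial object of the category of commutative `F`-algebras. -/
def baseObj : CAlg F := Under.mk (𝟙 (CommRingCat.of F))

/-- The unique `F`-algebra map from `F` to an `F`-algebra `S`. -/
def toAlg (S : CAlg F) : baseObj F ⟶ S := Under.homMk S.hom (by simp [baseObj])

end PresentableFunctors

open CategoryTheory Opposite PresentableFunctors in
/-- Generic splitting schemes from presentations: if `H'` is presentable with
presentation `A₁ →g A₀ →f H' → 0`, `φ : H' ⟶ H` is injective on `L`-points for all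
field extensions `L/F`, `α = φ(α')` and ``t` ∈ A₀(F)` lifts `α'`, then the fiber
`X = g⁻¹(ã)` is a generic splitting scheme for `α`: for every field extension `L/F`,
`X(L) ≠ ∅` iff `α_L = 0`. -/
theorem fiber_is_generic_splitting_scheme (F : Type u) [Field F]
    (H' H : AbFunctor F) (P : Presentation F H') (φ : H' ⟶ H)
    (hinj : ∀ S : CAlg F, IsField ↥S.right → Function.Injective (φ.app S))
    (α' : H'.obj (baseObj F)) (t : P.A₀.obj (baseObj F))
    (hlift : P.f.app (baseObj F) t = α') :
    ∀ S : CAlg F, IsField ↥S.right →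
      ((∃ x : P.A₁.obj S, P.g.app S x = P.A₀.map (toAlg F S) t) ↔
        H.map (toAlg F S) (φ.app (baseObj F) α') = 0) := by
  intro S hS
  have hφ : H.map (toAlg F S) (φ.app (baseObj F) α') = φ.app S (H'.map (toAlg F S) α') := by
    have := ConcreteCategory.congr_hom (φ.naturality (toAlg F S)) α'
    simp only [CategoryTheory.comp_apply] at this
    exact this.symm
  have hf : P.f.app S (P.A₀.map (toAlg F S) t) = H'.map (toAlg F S) α' := by
    rw [← hlift]
    exact ConcreteCategory.congr_hom (P.f.naturality (toAlg F S)) t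
  constructor
  · rintro ⟨x, hx⟩
    have : P.f.app S (P.A₀.map (toAlg F S) t) = 0 :=
      (P.exact S _).mpr ⟨x, hx⟩
    rw [hφ, ← hf, this, map_zero]
  · intro h0
    have : H'.map (toAlg F S) α' = 0 := by
      apply hinj S hS
      rw [← hφ, h0, map_zero]
    have hker : P.f.app S (P.A₀.map (toAlg F S) t) = 0 := by rw [hf, this]
    exact (P.exact S _).mp hker
end
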